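/- Let a₁v₁ + ... + aₙvₙ ≤ b with each view aᵢvᵢ ranging over a finite image set Iᵢ ⊆ ℤ, and suppose current lower bounds lbᵢ ∈ Iᵢ satisfy Σᵢ lbᵢ > b. Define iteratively, for j = 1..n: low'_j = low_{j-1} - lb_j and cur_j = next(b - low'_j, I_j) (the smallest element of I_j strictly greater than b - low'_j), with low₀ = Σᵢ lbᵢ and low_j = low'_j + cur_j. Then cur_j ≤ lb_j for all j and Σⱼ cur_j > b, so the tuple (cur₁,...,curₙ) yields a valid (and at least as strong) reason for the constraint's violation as (lb₁,...,lbₙ). -/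

import Mathlib

/-- The strengthened reason computed by `PropagateReification` at propagation
strength 4: iterating `low'_j = low_{j-1} - lb j`, `cur j = next(b - low'_j, I j)`
and `low_j = low'_j + cur j` (0-indexed here) yields values `cur j ≤ lb j` with
`∑ cur > b`, a reason at least as strong as the current lower bounds. -/
theorem propagate_reification_strengthening (n : ℕ) (I : Fin n → Finset ℤ)
    (lb : Fin n → ℤ) (hlb : ∀ i, lb i ∈ I i) (b : ℤ)
    (hviol : (∑ i, lb i) > b) :
    ∃ cur : Fin n → ℤ, ∃ low : ℕ → ℤ,
      low 0 = (∑ i, lb i) ∧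
      (∀ j : Fin n,
        cur j ∈ I j ∧
        b - (low j.val - lb j) < cur j ∧
        (∀ e ∈ I j, b - (low j.val - lb j) < e → cur j ≤ e) ∧
        low (j.val + 1) = (low j.val - lb j) + cur j) ∧
      (∀ j, cur j ≤ lb j) ∧ (∑ j, cur j) > b := by
  classical
  set S : Fin n → ℤ → Finset ℤ :=
    fun j L => (I j).filter (fun e => b - (L - lb j) < e) with hS
  have hmemS : ∀ (j : Fin n) (L : ℤ), b < L → lb j ∈ S j L := by
    intro j L hL
    simp only [hS, Finset.mem_filter]
    exact ⟨hlb j, by linarith⟩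
  set cf : Fin n → ℤ → ℤ := fun j L => WithTop.untopD 0 ((S j L).min) with hcfdef
  have hcf : ∀ (j : Fin n) (L : ℤ) (hL : b < L),
      cf j L = (S j L).min' ⟨lb j, hmemS j L hL⟩ := by
    intro j L hL
    have hne : (S j L).Nonempty := ⟨lb j, hmemS j L hL⟩
    have hmin : (S j L).min = ((S j L).min' hne : ℤ) := (Finset.coe_min' hne).symm
    simp [hcfdef, hmin]
  set low : ℕ → ℤ := fun k => Nat.rec (∑ i, lb i)
    (fun j L => if h : j < n then (L - lb ⟨j, h⟩) + cf ⟨j, h⟩ L else L) k with hlowdef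
  have hlow0 : low 0 = ∑ i, lb i := rfl
  have hlowsucc : ∀ (j : ℕ) (h : j < n),
      low (j + 1) = (low j - lb ⟨j, h⟩) + cf ⟨j, h⟩ (low j) := by
    intro j h; simp [hlowdef, h]
  -- invariant : b < low k for all k ≤ n (in fact all k, since low is constant past n)
  have hinv : ∀ k, b < low k := by
    intro k
    induction k with
    | zero => simpa [hlow0] using hviol
    | succ j ih =>
      by_cases h : j < n
      · have hne : (S ⟨j, h⟩ (low j)).Nonempty := ⟨lb ⟨j, h⟩, hmemS _ _ ih⟩
        have hcmem : cf ⟨j, h⟩ (low j) ∈ S ⟨j, h⟩ (low j) := by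
          rw [hcf _ _ ih]; exact Finset.min'_mem _ _
        have hgt : b - (low j - lb ⟨j, h⟩) < cf ⟨j, h⟩ (low j) := by
          have := (Finset.mem_filter.mp hcmem).2
          simpa using this
        rw [hlowsucc j h]; linarith
      · have : low (j + 1) = low j := by simp [hlowdef, h]
        rw [this]; exact ih
  refine ⟨fun j => cf j (low j.val), low, hlow0, ?_, ?_, ?_⟩
  · intro j
    have hL := hinv j.val
    have hne : (S j (low j.val)).Nonempty := ⟨lb j, hmemS _ _ hL⟩
    have hcmem : cf j (low j.val) ∈ S j (low j.val) := by
      rw [hcf _ _ hL]; exact Finset.min'_mem _ _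
    have hfilt := Finset.mem_filter.mp hcmem
    refine ⟨hfilt.1, hfilt.2, ?_, ?_⟩
    · intro e he hgt
      show cf j (low j.val) ≤ e
      rw [hcf _ _ hL]
      exact Finset.min'_le _ e (Finset.mem_filter.mpr ⟨he, hgt⟩)
    · have := hlowsucc j.val j.isLt
      simpa using this
  · intro j
    have hL := hinv j.val
    show cf j (low j.val) ≤ lb j
    rw [hcf _ _ hL]
    exact Finset.min'_le _ _ (hmemS _ _ hL)
  · -- telescoping: low n = ∑ cur
    have key : ∀ k, k ≤ n →
        low k = ∑ j : Fin n, (if j.val < k then cf j (low j.val) else lb j) := by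
      intro k hk
      induction k with
      | zero => simp [hlow0]
      | succ m ih =>
        have hm : m < n := hk
        have ihm := ih (le_of_lt hm)
        rw [hlowsucc m hm]
        have hdiff : ∀ j : Fin n,
            (if j.val < m + 1 then cf j (low j.val) else lb j)
              - (if j.val < m then cf j (low j.val) else lb j)
            = if j = ⟨m, hm⟩ then cf ⟨m, hm⟩ (low m) - lb ⟨m, hm⟩ else 0 := by
          intro j
          by_cases hj : j = ⟨m, hm⟩
          · subst hj; simp
          · have hjm : j.val ≠ m := fun h => hj (Fin.ext h)
            by_cases h1 : j.val < m
            · simp [h1, Nat.lt_succ_of_lt h1, hj]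
            · have h2 : ¬ j.val < m + 1 := by omega
              simp [h1, h2, hj]
        have : ∑ j : Fin n, (if j.val < m + 1 then cf j (low j.val) else lb j)
            = ∑ j : Fin n, (if j.val < m then cf j (low j.val) else lb j)
              + (cf ⟨m, hm⟩ (low m) - lb ⟨m, hm⟩) := by
          have hsum := Finset.sum_congr rfl (fun j (_ : j ∈ Finset.univ) => hdiff j)
          rw [Finset.sum_sub_distrib] at hsum
          rw [Finset.sum_ite_eq' Finset.univ (⟨m, hm⟩ : Fin n)] at hsum
          simp only [Finset.mem_univ, if_true] at hsum
          linarith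
        rw [this, ihm]; ring
    have hfin := key n le_rfl
    have : ∀ j : Fin n, (if j.val < n then cf j (low j.val) else lb j)
        = cf j (low j.val) := by intro j; simp [j.isLt]
    rw [Finset.sum_congr rfl (fun j _ => this j)] at hfin
    rw [← hfin]
    exact hinv n
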